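/- Fix σ, γ > 0, μ_A ∈ ℝ, θ ∈ ℝ, and let d = |μ_A − θ|. For σ_A > 0 define the optimal utility loss V(σ_A) = min( d², inf_{σ_U ∈ (0,∞)} [ σ_U²(σ_A⁴ + σ_U²·d²)/(σ_A² + σ_U²)² + (γ/2)·ln((σ² + σ_U²)/σ_U²) ] ). Then: (i) if 0 < σ_{A1} < σ_{A2} ≤ d, then V(σ_{A2}) ≤ V(σ_{A1}), and the inequality is strict whenever the infimum defining V(σ_{A1}) is attained at some σ_U ∈ (0, ∞) with value at most d²; (ii) if d ≤ σ_{A1} < σ_{A2}, then V(σ_{A1}) ≤ V(σ_{A2}). That is, censoring (small σ_A) benefits users with common preferences and hurts users with unique preferences. -/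
import Mathlib


/-- Censoring bias and user utility. Let `d = |μA − θ|` and let `V(σA)` be the
optimal utility loss of user `θ` facing an AI with prior standard deviation
`σA`. (i) On `0 < σA1 < σA2 ≤ d`, `V` is nonincreasing in censoring:
`V(σA2) ≤ V(σA1)`, strictly whenever the infimum defining `V(σA1)` is attained
at some `σU ∈ (0, ∞)` with value at most `d²`. (ii) On `d ≤ σA1 < σA2`,
`V(σA1) ≤ V(σA2)`. -/
theorem censoring_bias_utility (σ γ μA θ : ℝ) (hσ : 0 < σ) (hγ : 0 < γ)
    (L : ℝ → ℝ → ℝ)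
    (hL : ∀ σA σU, L σA σU =
      σU ^ 2 * (σA ^ 4 + σU ^ 2 * (μA - θ) ^ 2) / (σA ^ 2 + σU ^ 2) ^ 2
        + γ / 2 * Real.log ((σ ^ 2 + σU ^ 2) / σU ^ 2))
    (V : ℝ → ℝ)
    (hV : ∀ σA, V σA = min ((μA - θ) ^ 2) (⨅ σU : Set.Ioi (0 : ℝ), L σA σU)) :
    (∀ σA1 σA2 : ℝ, 0 < σA1 → σA1 < σA2 → σA2 ≤ |μA - θ| →
      V σA2 ≤ V σA1 ∧
      ((∃ σU : ℝ, 0 < σU ∧ L σA1 σU = (⨅ σU' : Set.Ioi (0 : ℝ), L σA1 σU') ∧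
          L σA1 σU ≤ (μA - θ) ^ 2) →
        V σA2 < V σA1)) ∧
    (∀ σA1 σA2 : ℝ, |μA - θ| ≤ σA1 → σA1 < σA2 → V σA1 ≤ V σA2) := by
  set d2 := (μA - θ) ^ 2 with hd2
  -- nonnegativity of L, giving bounded-below infima
  have hLnn : ∀ σA σU : ℝ, 0 < σU → 0 ≤ L σA σU := by
    intro σA σU hu
    rw [hL]
    have h1 : 0 ≤ σU ^ 2 * (σA ^ 4 + σU ^ 2 * d2) / (σA ^ 2 + σU ^ 2) ^ 2 := by
      positivity
    have h2 : 0 ≤ Real.log ((σ ^ 2 + σU ^ 2) / σU ^ 2) := by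
      apply Real.log_nonneg
      rw [le_div_iff₀ (by positivity)]
      nlinarith [sq_nonneg σ]
    have := mul_nonneg (by positivity : (0:ℝ) ≤ γ / 2) h2
    linarith
  have hbdd : ∀ σA : ℝ, BddBelow (Set.range fun σU : Set.Ioi (0:ℝ) => L σA σU) := by
    intro σA
    refine ⟨0, ?_⟩
    rintro x ⟨⟨u, hu⟩, rfl⟩
    exact hLnn σA u hu
  constructor
  · intro σA1 σA2 h1 h12 h2d
    have hsq2 : σA2 ^ 2 ≤ d2 := by
      rw [hd2, ← sq_abs (μA - θ)]
      exact pow_le_pow_left₀ (le_of_lt (h1.trans h12)) h2d 2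
    have hsq1 : σA1 ^ 2 < σA2 ^ 2 := by nlinarith
    -- strict pointwise comparison
    have hpt : ∀ σU : ℝ, 0 < σU → L σA2 σU < L σA1 σU := by
      intro σU hu
      rw [hL, hL]
      have hfrac : σU ^ 2 * (σA2 ^ 4 + σU ^ 2 * d2) / (σA2 ^ 2 + σU ^ 2) ^ 2
          < σU ^ 2 * (σA1 ^ 4 + σU ^ 2 * d2) / (σA1 ^ 2 + σU ^ 2) ^ 2 := by
        rw [div_lt_div_iff₀ (by positivity) (by positivity)]
        have hid : σU ^ 2 * (σA1 ^ 4 + σU ^ 2 * d2) * (σA2 ^ 2 + σU ^ 2) ^ 2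
            - σU ^ 2 * (σA2 ^ 4 + σU ^ 2 * d2) * (σA1 ^ 2 + σU ^ 2) ^ 2
            = σU ^ 4 * (σA2 ^ 2 - σA1 ^ 2) *
              ((d2 - σA1 ^ 2) * (σA2 ^ 2 + σU ^ 2) + (d2 - σA2 ^ 2) * (σA1 ^ 2 + σU ^ 2)) := by
          ring
        have hpos : 0 < σU ^ 4 * (σA2 ^ 2 - σA1 ^ 2) *
            ((d2 - σA1 ^ 2) * (σA2 ^ 2 + σU ^ 2) + (d2 - σA2 ^ 2) * (σA1 ^ 2 + σU ^ 2)) := by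
          have t1 : 0 < (d2 - σA1 ^ 2) * (σA2 ^ 2 + σU ^ 2) := by
            apply mul_pos (by linarith) (by positivity)
          have t2 : 0 ≤ (d2 - σA2 ^ 2) * (σA1 ^ 2 + σU ^ 2) := by
            apply mul_nonneg (by linarith) (by positivity)
          apply mul_pos (mul_pos (by positivity) (by linarith))
          linarith
        linarith
      linarith
    have hinf : (⨅ σU : Set.Ioi (0:ℝ), L σA2 σU) ≤ ⨅ σU : Set.Ioi (0:ℝ), L σA1 σU := by
      apply ciInf_mono (hbdd σA2)
      intro ⟨u, hu⟩
      exact (hpt u hu).le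
    refine ⟨by rw [hV, hV]; exact min_le_min le_rfl hinf, ?_⟩
    rintro ⟨σU, hu, heq, hle⟩
    have hV1 : V σA1 = L σA1 σU := by
      rw [hV, heq, min_eq_right]; rw [← heq]; exact hle
    have h2le : (⨅ σU' : Set.Ioi (0:ℝ), L σA2 σU') ≤ L σA2 σU :=
      ciInf_le (hbdd σA2) ⟨σU, hu⟩
    calc V σA2 ≤ ⨅ σU' : Set.Ioi (0:ℝ), L σA2 σU' := by rw [hV]; exact min_le_right _ _
      _ ≤ L σA2 σU := h2le
      _ < L σA1 σU := hpt σU hu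
      _ = V σA1 := hV1.symm
  · intro σA1 σA2 hd1 h12
    have h1nn : 0 ≤ σA1 := le_trans (abs_nonneg _) hd1
    have hsq1 : d2 ≤ σA1 ^ 2 := by
      rw [hd2, ← sq_abs (μA - θ)]
      exact pow_le_pow_left₀ (abs_nonneg _) hd1 2
    have hsq12 : σA1 ^ 2 ≤ σA2 ^ 2 := pow_le_pow_left₀ h1nn h12.le 2
    have hpt : ∀ σU : ℝ, 0 < σU → L σA1 σU ≤ L σA2 σU := by
      intro σU hu
      rw [hL, hL]
      have hfrac : σU ^ 2 * (σA1 ^ 4 + σU ^ 2 * d2) / (σA1 ^ 2 + σU ^ 2) ^ 2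
          ≤ σU ^ 2 * (σA2 ^ 4 + σU ^ 2 * d2) / (σA2 ^ 2 + σU ^ 2) ^ 2 := by
        rw [div_le_div_iff₀ (by positivity) (by positivity)]
        have hid : σU ^ 2 * (σA2 ^ 4 + σU ^ 2 * d2) * (σA1 ^ 2 + σU ^ 2) ^ 2
            - σU ^ 2 * (σA1 ^ 4 + σU ^ 2 * d2) * (σA2 ^ 2 + σU ^ 2) ^ 2
            = σU ^ 4 * (σA2 ^ 2 - σA1 ^ 2) *
              ((σA1 ^ 2 - d2) * (σA2 ^ 2 + σU ^ 2) + (σA2 ^ 2 - d2) * (σA1 ^ 2 + σU ^ 2)) := by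
          ring
        have hpos : 0 ≤ σU ^ 4 * (σA2 ^ 2 - σA1 ^ 2) *
            ((σA1 ^ 2 - d2) * (σA2 ^ 2 + σU ^ 2) + (σA2 ^ 2 - d2) * (σA1 ^ 2 + σU ^ 2)) := by
          have t1 : 0 ≤ (σA1 ^ 2 - d2) * (σA2 ^ 2 + σU ^ 2) := by
            apply mul_nonneg (by linarith) (by positivity)
          have t2 : 0 ≤ (σA2 ^ 2 - d2) * (σA1 ^ 2 + σU ^ 2) := by
            apply mul_nonneg (by linarith) (by positivity)
          apply mul_nonneg (mul_nonneg (by positivity) (by linarith))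
          linarith
        linarith
      linarith
    have hinf : (⨅ σU : Set.Ioi (0:ℝ), L σA1 σU) ≤ ⨅ σU : Set.Ioi (0:ℝ), L σA2 σU := by
      apply ciInf_mono (hbdd σA1)
      intro ⟨u, hu⟩
      exact hpt u hu
    rw [hV, hV]
    exact min_le_min le_rfl hinf
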